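/- arXiv:1602.02792 — 2 statements merged into one kernel-verified Lean document; each statement's English description precedes it below -/
import Mathlib

section
/- Let 0 < λ < 1 with λ ≥ c(K)/b(K), and let γ satisfy 0 ≤ γ ≤ (λ b(K) − c(K))/(1+λ). Define p(y) := (c(y) + (1+λ)γ)/(λ b(K)) for y ∈ [0,K]. Then 0 ≤ p(y) ≤ 1 for all y ∈ [0,K], and the reactive two-point strategy σ_X^0[y_0] = p(y_0) δ_K + (1−p(y_0)) δ_0, σ_X[x,y] = p(y) δ_K + (1−p(y)) δ_0 satisfies, with ψ(s) := b(s) − γ, the identity (b(x) − γ) + λ(−c(y) − γ) + ((1−λ²)/λ)(−c(y_0) − γ) = ψ(x) − λ² ∫ ψ dσ_X[x,y] − (1−λ²) ∫ ψ dσ_X^0[y_0] for all x, y, y_0 ∈ [0,K]. Consequently, in the strictly-alternating continuous Donation Game in which Y moves first, this strategy is an equalizer that unilaterally enforces π_Y = γ. -/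
open MeasureTheory

lemma two_point_integral {K : ℝ} (f : Set.Icc (0:ℝ) K → ℝ)
    (hf : Continuous f) (r : ℝ) (hr0 : 0 ≤ r) (hr1 : r ≤ 1)
    (aK a0 : Set.Icc (0:ℝ) K) :
    ∫ s, f s ∂(ENNReal.ofReal r • Measure.dirac aK + ENNReal.ofReal (1 - r) • Measure.dirac a0)
      = r * f aK + (1 - r) * f a0 := by
  have h1 : IsFiniteMeasure (ENNReal.ofReal r • Measure.dirac aK) :=
    Measure.smul_finite _ ENNReal.ofReal_ne_top
  have h2 : IsFiniteMeasure (ENNReal.ofReal (1 - r) • Measure.dirac a0) :=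
    Measure.smul_finite _ ENNReal.ofReal_ne_top
  have i1 : Integrable f (ENNReal.ofReal r • Measure.dirac aK) :=
    hf.integrable_of_hasCompactSupport (HasCompactSupport.of_compactSpace f)
  have i2 : Integrable f (ENNReal.ofReal (1 - r) • Measure.dirac a0) :=
    hf.integrable_of_hasCompactSupport (HasCompactSupport.of_compactSpace f)
  rw [integral_add_measure i1 i2, integral_smul_measure, integral_smul_measure,
    integral_dirac, integral_dirac, ENNReal.toReal_ofReal hr0,
    ENNReal.toReal_ofReal (by linarith)]
  simp [smul_eq_mul]

/-- integrating a `[0,1]`-valued measurable weight against a family of two-point measures. -/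
lemma two_point_lintegral {K : ℝ} {α : Type*} [MeasurableSpace α]
    (μ : Measure α) [IsProbabilityMeasure μ]
    (f : α → ℝ) (hf : Measurable f) (hf0 : ∀ x, 0 ≤ f x) (hf1 : ∀ x, f x ≤ 1)
    (aK a0 : Set.Icc (0:ℝ) K) (E : Set (Set.Icc (0:ℝ) K)) :
    ∫⁻ x, (ENNReal.ofReal (f x) • Measure.dirac aK
        + ENNReal.ofReal (1 - f x) • Measure.dirac a0) E ∂μ
      = (ENNReal.ofReal (∫ x, f x ∂μ) • Measure.dirac aK
        + ENNReal.ofReal (1 - ∫ x, f x ∂μ) • Measure.dirac a0) E := by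
  have hint : Integrable f μ := by
    refine (integrable_const (1:ℝ)).mono' hf.aestronglyMeasurable ?_
    filter_upwards with x
    rw [Real.norm_eq_abs, abs_le]
    exact ⟨by linarith [hf0 x], by simpa using hf1 x⟩
  have hint' : Integrable (fun x => 1 - f x) μ := (integrable_const (1:ℝ)).sub hint
  have e1 : ENNReal.ofReal (∫ x, f x ∂μ) = ∫⁻ x, ENNReal.ofReal (f x) ∂μ :=
    ofReal_integral_eq_lintegral_ofReal hint (Filter.Eventually.of_forall hf0)
  have e2 : ENNReal.ofReal (1 - ∫ x, f x ∂μ) = ∫⁻ x, ENNReal.ofReal (1 - f x) ∂μ := by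
    have : (1:ℝ) - ∫ x, f x ∂μ = ∫ x, (1 - f x) ∂μ := by
      rw [integral_sub (integrable_const 1) hint]; simp
    rw [this]
    exact ofReal_integral_eq_lintegral_ofReal hint'
      (Filter.Eventually.of_forall fun x => by dsimp; linarith [hf1 x])
  simp only [Measure.add_apply, Measure.smul_apply, smul_eq_mul]
  rw [lintegral_add_left (hf.ennreal_ofReal.mul_const _),
    lintegral_mul_const _ hf.ennreal_ofReal,
    lintegral_mul_const _ (f := fun x => ENNReal.ofReal (1 - f x)) (measurable_const.sub hf).ennreal_ofReal,
    e1, e2]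

/-- Reactive two-point equalizer strategies in the strictly-alternating
continuous Donation Game in which `Y` moves first: for `λ ≥ c(K)/b(K)` and
`0 ≤ γ ≤ (λ b(K) − c(K))/(1+λ)`, the reaction probabilities `p(y)` lie in
`[0,1]`, the strategy `σX0[y₀] = p(y₀) δ_K + (1−p(y₀)) δ_0`,
`σX[x,y] = p(y) δ_K + (1−p(y)) δ_0` satisfies the autocratic identity with
`ψ(s) = b(s) − γ`, and consequently it unilaterally enforces `π_Y = γ` for
every strategy of player `Y`. -/
theorem stmt_16
    (K : ℝ) (hK : 0 < K) (b c : ℝ → ℝ)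
    (hbC : ContinuousOn b (Set.Icc 0 K)) (hcC : ContinuousOn c (Set.Icc 0 K))
    (hbM : MonotoneOn b (Set.Icc 0 K)) (hcM : MonotoneOn c (Set.Icc 0 K))
    (hb0 : b 0 = 0) (hc0 : c 0 = 0)
    (hcb : ∀ s ∈ Set.Ioc (0 : ℝ) K, c s < b s)
    (hcpos : ∀ s ∈ Set.Ioc (0 : ℝ) K, 0 < c s)
    (lam : ℝ) (hlam0 : 0 < lam) (hlam1 : lam < 1)
    (hlamge : c K / b K ≤ lam)
    (γ : ℝ) (hγ0 : 0 ≤ γ) (hγ1 : γ ≤ (lam * b K - c K) / (1 + lam))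
    (p : Set.Icc (0 : ℝ) K → ℝ)
    (hp : ∀ y : Set.Icc (0 : ℝ) K,
      p y = (c ↑y + (1 + lam) * γ) / (lam * b K))
    (σX0 : Set.Icc (0 : ℝ) K → Measure (Set.Icc (0 : ℝ) K))
    (hσX0 : ∀ y0 : Set.Icc (0 : ℝ) K, σX0 y0 =
      ENNReal.ofReal (p y0) • Measure.dirac (⟨K, Set.right_mem_Icc.mpr hK.le⟩ : Set.Icc (0 : ℝ) K)
        + ENNReal.ofReal (1 - p y0) • Measure.dirac (⟨0, Set.left_mem_Icc.mpr hK.le⟩ : Set.Icc (0 : ℝ) K))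
    (σX : Set.Icc (0 : ℝ) K × Set.Icc (0 : ℝ) K → Measure (Set.Icc (0 : ℝ) K))
    (hσX : ∀ q : Set.Icc (0 : ℝ) K × Set.Icc (0 : ℝ) K, σX q =
      ENNReal.ofReal (p q.2) • Measure.dirac (⟨K, Set.right_mem_Icc.mpr hK.le⟩ : Set.Icc (0 : ℝ) K)
        + ENNReal.ofReal (1 - p q.2) • Measure.dirac (⟨0, Set.left_mem_Icc.mpr hK.le⟩ : Set.Icc (0 : ℝ) K)) :
    (∀ y : Set.Icc (0 : ℝ) K, 0 ≤ p y ∧ p y ≤ 1) ∧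
    (∀ x y y0 : Set.Icc (0 : ℝ) K,
      (b ↑x - γ) + lam * (-(c ↑y) - γ)
          + ((1 - lam ^ 2) / lam) * (-(c ↑y0) - γ) =
        (b ↑x - γ) - lam ^ 2 * (∫ s, (b ↑s - γ) ∂(σX (x, y)))
          - (1 - lam ^ 2) * (∫ s, (b ↑s - γ) ∂(σX0 y0))) ∧
    (∀ σY0 : Measure (Set.Icc (0 : ℝ) K), IsProbabilityMeasure σY0 →
      ∀ ν : ℕ → Measure (Set.Icc (0 : ℝ) K × Set.Icc (0 : ℝ) K),
      (∀ t, IsProbabilityMeasure (ν t)) →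
      (∀ E : Set (Set.Icc (0 : ℝ) K), MeasurableSet E →
        ν 0 (E ×ˢ Set.univ) = ∫⁻ y0, σX0 y0 E ∂σY0) →
      (∀ (t : ℕ) (E : Set (Set.Icc (0 : ℝ) K)), MeasurableSet E →
        ν (t + 1) (E ×ˢ Set.univ) = ∫⁻ q, σX q E ∂(ν t)) →
      (1 - lam) * ((∫ y0, -(c ↑y0) ∂σY0) + ∑' t : ℕ, lam ^ (2 * t + 1) *
          ∫ q, (b ↑q.1 + lam * (-(c ↑q.2))) ∂(ν t)) = γ) := by
  -- basic facts
  have hKmem : K ∈ Set.Icc (0:ℝ) K := Set.right_mem_Icc.mpr hK.le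
  have h0mem : (0:ℝ) ∈ Set.Icc (0:ℝ) K := Set.left_mem_Icc.mpr hK.le
  set aK : Set.Icc (0:ℝ) K := ⟨K, hKmem⟩ with haK
  set a0 : Set.Icc (0:ℝ) K := ⟨0, h0mem⟩ with ha0
  have hcK : 0 < c K := hcpos K ⟨hK, le_refl K⟩
  have hbK : 0 < b K := lt_trans hcK (hcb K ⟨hK, le_refl K⟩)
  have hlamB : 0 < lam * b K := mul_pos hlam0 hbK
  have hγ1' : (1 + lam) * γ ≤ lam * b K - c K := by
    have h1l : (0:ℝ) < 1 + lam := by linarith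
    calc (1 + lam) * γ ≤ (1+lam) * ((lam * b K - c K)/(1+lam)) :=
          mul_le_mul_of_nonneg_left hγ1 (by linarith)
      _ = lam * b K - c K := by field_simp
  have hcynn : ∀ y : Set.Icc (0:ℝ) K, 0 ≤ c ↑y := by
    intro y
    have := hcM h0mem y.2 y.2.1
    rw [hc0] at this; exact this
  -- Part 1
  have part1 : ∀ y : Set.Icc (0:ℝ) K, 0 ≤ p y ∧ p y ≤ 1 := by
    intro y
    have hcyK : c ↑y ≤ c K := hcM y.2 hKmem y.2.2
    have hcy0 := hcynn y
    constructor
    · rw [hp]; positivity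
    · rw [hp, div_le_one hlamB]; linarith
  -- key scalar identity
  have hkey : ∀ y : Set.Icc (0:ℝ) K, lam * b K * p y = c ↑y + (1 + lam) * γ := by
    intro y; rw [hp]; field_simp
  -- ψ continuous
  have hψc : Continuous (fun s : Set.Icc (0:ℝ) K => b ↑s - γ) :=
    hbC.restrict.sub continuous_const
  have hψK : b ↑aK - γ = b K - γ := rfl
  have hψ0 : b ↑a0 - γ = -γ := by simp [ha0, hb0]
  -- the two-point integral of ψ
  have hTint : ∀ r : ℝ, 0 ≤ r → r ≤ 1 →
      (∫ s, (b ↑s - γ) ∂(ENNReal.ofReal r • Measure.dirac aK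
        + ENNReal.ofReal (1 - r) • Measure.dirac a0)) = r * b K - γ := by
    intro r hr0 hr1
    rw [two_point_integral (fun s : Set.Icc (0:ℝ) K => b ↑s - γ) hψc r hr0 hr1 aK a0]
    show r * (b ↑aK - γ) + (1 - r) * (b ↑a0 - γ) = r * b K - γ
    rw [hψK, hψ0]; ring
  -- Part 2
  have part2 : ∀ x y y0 : Set.Icc (0 : ℝ) K,
      (b ↑x - γ) + lam * (-(c ↑y) - γ)
          + ((1 - lam ^ 2) / lam) * (-(c ↑y0) - γ) =
        (b ↑x - γ) - lam ^ 2 * (∫ s, (b ↑s - γ) ∂(σX (x, y)))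
          - (1 - lam ^ 2) * (∫ s, (b ↑s - γ) ∂(σX0 y0)) := by
    intro x y y0
    rw [hσX, hσX0, hTint (p y) (part1 y).1 (part1 y).2,
      hTint (p y0) (part1 y0).1 (part1 y0).2]
    have k1 := hkey y
    have k2 := hkey y0
    field_simp
    nlinarith [k1, k2, sq_nonneg lam]
  refine ⟨part1, part2, ?_⟩
  -- Part 3
  intro σY0 hσY0 ν hν hν0 hνS
  have hpc : Continuous p := by
    have hpe : p = fun y : Set.Icc (0:ℝ) K => (c ↑y + (1 + lam) * γ) / (lam * b K) :=
      funext hp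
    rw [hpe]
    exact (hcC.restrict.add continuous_const).div_const _
  have hpm : Measurable p := hpc.measurable
  -- integrability of continuous functions
  have hIP : ∀ (t : ℕ) (f : Set.Icc (0:ℝ) K × Set.Icc (0:ℝ) K → ℝ), Continuous f →
      Integrable f (ν t) := fun t f hf =>
    haveI := hν t
    hf.integrable_of_hasCompactSupport (HasCompactSupport.of_compactSpace f)
  have hIP0 : ∀ f : Set.Icc (0:ℝ) K → ℝ, Continuous f → Integrable f σY0 := fun f hf =>
    hf.integrable_of_hasCompactSupport (HasCompactSupport.of_compactSpace f)
  -- average cooperation probabilities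
  set av : ℝ := ∫ y0, p y0 ∂σY0 with hav
  set aseq : ℕ → ℝ := fun t => ∫ q, p q.2 ∂(ν t) with haseq
  have hbound : ∀ {α : Type} [MeasurableSpace α] (μ : Measure α), IsProbabilityMeasure μ →
      ∀ f : α → ℝ, Integrable f μ → (∀ x, 0 ≤ f x) → (∀ x, f x ≤ 1) →
      0 ≤ (∫ x, f x ∂μ) ∧ (∫ x, f x ∂μ) ≤ 1 := by
    intro α _ μ hμ f hfi hf0 hf1
    constructor
    · exact integral_nonneg hf0
    · calc (∫ x, f x ∂μ) ≤ ∫ _x, (1:ℝ) ∂μ := integral_mono hfi (integrable_const 1) hf1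
        _ = 1 := by simp [measure_univ]
  have hav01 : 0 ≤ av ∧ av ≤ 1 := by
    rw [hav]
    exact hbound σY0 hσY0 p (hIP0 p hpc) (fun y => (part1 y).1) (fun y => (part1 y).2)
  have haseq01 : ∀ t, 0 ≤ aseq t ∧ aseq t ≤ 1 := by
    intro t
    rw [haseq]
    exact hbound (ν t) (hν t) _ (hIP t _ (hpc.comp continuous_snd))
      (fun q => (part1 q.2).1) (fun q => (part1 q.2).2)
  -- the first marginals
  have hmarg0 : Measure.map Prod.fst (ν 0) =
      ENNReal.ofReal av • Measure.dirac aK + ENNReal.ofReal (1 - av) • Measure.dirac a0 := by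
    haveI := hν 0
    ext E hE
    rw [Measure.map_apply measurable_fst hE, ← Set.prod_univ, hν0 E hE]
    simp only [hσX0]
    exact two_point_lintegral σY0 p hpm (fun y => (part1 y).1) (fun y => (part1 y).2) aK a0 E
  have hmargS : ∀ t, Measure.map Prod.fst (ν (t+1)) =
      ENNReal.ofReal (aseq t) • Measure.dirac aK
        + ENNReal.ofReal (1 - aseq t) • Measure.dirac a0 := by
    intro t
    haveI := hν (t+1)
    haveI := hν t
    ext E hE
    rw [Measure.map_apply measurable_fst hE, ← Set.prod_univ, hνS t E hE]
    simp only [hσX]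
    exact two_point_lintegral (ν t) (fun q => p q.2) (hpm.comp measurable_snd)
      (fun q => (part1 q.2).1) (fun q => (part1 q.2).2) aK a0 E
  -- the sequence F
  set F : ℕ → ℝ := fun t => ∫ q, (b ↑q.1 - γ) ∂(ν t) with hF
  have hFmap : ∀ t, F t = ∫ s, (b ↑s - γ) ∂(Measure.map Prod.fst (ν t)) := by
    intro t
    rw [hF]
    exact (integral_map measurable_fst.aemeasurable hψc.aestronglyMeasurable).symm
  have hF0 : F 0 = av * b K - γ := by
    rw [hFmap 0, hmarg0]
    exact hTint av hav01.1 hav01.2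
  have hFS : ∀ t, F (t+1) = aseq t * b K - γ := by
    intro t
    rw [hFmap (t+1), hmargS t]
    exact hTint (aseq t) (haseq01 t).1 (haseq01 t).2
  -- one-round payoffs
  have hu : ∀ t, (∫ q, (b ↑q.1 + lam * (-(c ↑q.2))) ∂(ν t))
      = F t + ((1 + lam) * γ - lam ^ 2 * F (t+1)) := by
    intro t
    haveI := hν t
    have hpt : ∀ q : Set.Icc (0:ℝ) K × Set.Icc (0:ℝ) K,
        b ↑q.1 + lam * (-(c ↑q.2)) =
          (b ↑q.1 - γ) + ((-(lam ^ 2 * b K)) * p q.2 + ((1 + lam) * γ + lam ^ 2 * γ)) := by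
      intro q
      have k := hkey q.2
      linear_combination lam * k
    have e1 : (∫ q, (b ↑q.1 + lam * (-(c ↑q.2))) ∂(ν t))
        = ∫ q, ((b ↑q.1 - γ) + ((-(lam ^ 2 * b K)) * p q.2 + ((1 + lam) * γ + lam ^ 2 * γ))) ∂(ν t) :=
      integral_congr_ae (Filter.Eventually.of_forall hpt)
    have i1 : Integrable (fun q : Set.Icc (0:ℝ) K × Set.Icc (0:ℝ) K => b ↑q.1 - γ) (ν t) :=
      hIP t _ (hψc.comp continuous_fst)
    have i2 : Integrable (fun q : Set.Icc (0:ℝ) K × Set.Icc (0:ℝ) K => p q.2) (ν t) :=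
      hIP t _ (hpc.comp continuous_snd)
    have i3 : Integrable (fun q : Set.Icc (0:ℝ) K × Set.Icc (0:ℝ) K =>
        (-(lam ^ 2 * b K)) * p q.2) (ν t) := i2.const_mul _
    have i4 : Integrable (fun _q : Set.Icc (0:ℝ) K × Set.Icc (0:ℝ) K =>
        ((1 + lam) * γ + lam ^ 2 * γ)) (ν t) := integrable_const _
    have i34 : Integrable (fun q : Set.Icc (0:ℝ) K × Set.Icc (0:ℝ) K =>
        (-(lam ^ 2 * b K)) * p q.2 + ((1 + lam) * γ + lam ^ 2 * γ)) (ν t) := i3.add i4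
    rw [e1, integral_add i1 i34, integral_add i3 i4,
      integral_const_mul, integral_const]
    rw [hFS t]
    simp only [measure_univ, probReal_univ, ENNReal.toReal_one, smul_eq_mul, one_mul, ← haseq, ← hF]
    ring
  -- the value of ∫ -c dσY0
  have hC0 : (∫ y0, -(c ↑y0) ∂σY0) = (-(lam * b K)) * av + (1 + lam) * γ := by
    have hpt : ∀ y0 : Set.Icc (0:ℝ) K,
        -(c ↑y0) = (-(lam * b K)) * p y0 + (1 + lam) * γ := by
      intro y0
      have k := hkey y0
      linear_combination k
    have e1 : (∫ y0, -(c ↑y0) ∂σY0)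
        = ∫ y0, ((-(lam * b K)) * p y0 + (1 + lam) * γ) ∂σY0 :=
      integral_congr_ae (Filter.Eventually.of_forall hpt)
    have j3 : Integrable (fun y0 : Set.Icc (0:ℝ) K => (-(lam * b K)) * p y0) σY0 :=
      (hIP0 p hpc).const_mul _
    have j4 : Integrable (fun _y0 : Set.Icc (0:ℝ) K => (1 + lam) * γ) σY0 :=
      integrable_const _
    rw [e1, integral_add j3 j4, integral_const_mul, integral_const]
    simp only [measure_univ, probReal_univ, ENNReal.toReal_one, smul_eq_mul, one_mul, ← hav]
  -- summability and telescoping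
  have hlam2 : lam ^ 2 < 1 := by nlinarith
  set G : ℕ → ℝ := fun t => lam ^ (2 * t + 1) * F t with hG
  have hpow : ∀ t : ℕ, lam ^ (2 * t + 1) = lam * (lam ^ 2) ^ t := by
    intro t
    rw [pow_succ, pow_mul]
    ring
  have hFbd : ∀ t, |F t| ≤ b K + γ := by
    have habs : ∀ r : ℝ, 0 ≤ r → r ≤ 1 → |r * b K - γ| ≤ b K + γ := by
      intro r h0 h1
      rw [abs_le]
      constructor <;> nlinarith
    intro t
    cases t with
    | zero => rw [hF0]; exact habs av hav01.1 hav01.2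
    | succ n => rw [hFS n]; exact habs (aseq n) (haseq01 n).1 (haseq01 n).2
  have hGsum : Summable G := by
    apply Summable.of_norm_bounded
      (g := fun t => (lam * (b K + γ)) * (lam ^ 2) ^ t)
      ((summable_geometric_of_lt_one (sq_nonneg lam) hlam2).mul_left _)
    intro t
    rw [hG]
    rw [Real.norm_eq_abs, abs_mul, abs_pow, abs_of_pos hlam0, hpow t]
    have h1 : (0:ℝ) ≤ lam * (lam ^ 2) ^ t := by positivity
    calc lam * (lam ^ 2) ^ t * |F t| ≤ lam * (lam ^ 2) ^ t * (b K + γ) :=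
          mul_le_mul_of_nonneg_left (hFbd t) h1
      _ = lam * (b K + γ) * (lam ^ 2) ^ t := by ring
  have hG1 : Summable (fun t => G (t + 1)) := (summable_nat_add_iff 1).mpr hGsum
  have hgeo : Summable (fun t : ℕ => (lam ^ 2) ^ t) :=
    summable_geometric_of_lt_one (sq_nonneg lam) hlam2
  have hCeq : (fun t : ℕ => lam ^ (2 * t + 1) * ((1 + lam) * γ))
      = fun t : ℕ => (lam * ((1 + lam) * γ)) * (lam ^ 2) ^ t := by
    funext t; rw [hpow t]; ring
  have hCsum : Summable (fun t : ℕ => lam ^ (2 * t + 1) * ((1 + lam) * γ)) := by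
    rw [hCeq]; exact hgeo.mul_left _
  have hterm : ∀ t, lam ^ (2 * t + 1) * (∫ q, (b ↑q.1 + lam * (-(c ↑q.2))) ∂(ν t))
      = (G t - G (t + 1)) + lam ^ (2 * t + 1) * ((1 + lam) * γ) := by
    intro t
    rw [hu t]
    have e : lam ^ (2 * (t + 1) + 1) = lam ^ (2 * t + 1) * lam ^ 2 := by ring
    simp only [hG]
    rw [e]
    ring
  have htel : (∑' t, (G t - G (t + 1))) = G 0 := by
    rw [Summable.tsum_sub hGsum hG1, Summable.tsum_eq_zero_add hGsum]
    ring
  have hgeoval : (∑' t : ℕ, lam ^ (2 * t + 1) * ((1 + lam) * γ))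
      = (lam * ((1 + lam) * γ)) * (1 - lam ^ 2)⁻¹ := by
    rw [hCeq, tsum_mul_left, tsum_geometric_of_lt_one (sq_nonneg lam) hlam2]
  have hG0 : G 0 = lam * F 0 := by simp [hG]
  have hsum : (∑' t : ℕ, lam ^ (2 * t + 1) * ∫ q, (b ↑q.1 + lam * (-(c ↑q.2))) ∂(ν t))
      = lam * F 0 + (lam * ((1 + lam) * γ)) * (1 - lam ^ 2)⁻¹ := by
    rw [tsum_congr hterm, Summable.tsum_add (hGsum.sub hG1) hCsum, htel, hgeoval, hG0]
  rw [hC0, hsum, hF0]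
  have hne : (1 : ℝ) - lam ^ 2 ≠ 0 := by nlinarith
  field_simp
  ring
end

section
/- Let 0 < λ < 1, 0 < ω_X ≤ 1, χ ≥ 1, and suppose λ ≥ (1/ω_X) · (b(K) + χ c(K)) / ((χ+1)(b(K) + c(K))). Let κ_X^{KK} = (1−ω_X) b(K) − ω_X c(K) and κ_Y^{KK} = ω_X b(K) − (1−ω_X) c(K), and let κ_X, κ_Y ∈ ℝ satisfy κ_X ≤ χκ_Y ≤ κ_X + (χκ_Y^{KK} − κ_X^{KK}); set γ := χκ_Y − κ_X. Suppose p_0 ∈ [0,1] satisfies max{ (b(K)+χ c(K)+γ)/((1−λ) ω_X (χ+1)(b(K)+c(K))) − λ/(1−λ), 0 } ≤ p_0 ≤ min{ γ/((1−λ) ω_X (χ+1)(b(K)+c(K))), 1 }, and define p(s) := (b(s)+χ c(s)+γ)/(λ ω_X (χ+1)(b(K)+c(K))) − ((1−λ)/λ) p_0 for s ∈ [0,K]. Then 0 ≤ p(s) ≤ 1 for all s ∈ [0,K], and the two-point strategy σ_X^0 = p_0 δ_K + (1−p_0) δ_0, σ_X^X[x] = p(x) δ_K + (1−p(x)) δ_0,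 σ_X^Y[y] = p(y) δ_K + (1−p(y)) δ_0 satisfies, with ψ(s) := −(χ+1)(b(s)+c(s)), both identities −c(x) − χ b(x) + γ = ψ(x) − λ ω_X ∫ ψ dσ_X^X[x] − (1−λ) ω_X ∫ ψ dσ_X^0 and b(y) + χ c(y) + γ = − λ ω_X ∫ ψ dσ_X^Y[y] − (1−λ) ω_X ∫ ψ dσ_X^0 for all x, y ∈ [0,K]. Consequently, in the randomly-alternating continuous Donation Game, this strategy unilaterally enforces π_X − κ_X = χ(π_Y − κ_Y). -/
open MeasureTheory

theorem two_point_integral' {X : Type*} [MeasurableSpace X] [MeasurableSingletonClass X]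
    (f : X → ℝ) (a b : ℝ) (ha : 0 ≤ a) (hb : 0 ≤ b) (x y : X) :
    ∫ s, f s ∂(ENNReal.ofReal a • Measure.dirac x + ENNReal.ofReal b • Measure.dirac y)
      = a * f x + b * f y := by
  have hx : Integrable f (Measure.dirac x) := by
    refine (integrable_const (f x)).congr ?_
    exact (MeasureTheory.ae_eq_dirac f).symm
  have hy : Integrable f (Measure.dirac y) := by
    refine (integrable_const (f y)).congr ?_
    exact (MeasureTheory.ae_eq_dirac f).symm
  rw [integral_add_measure (hx.smul_measure ENNReal.ofReal_ne_top)
    (hy.smul_measure ENNReal.ofReal_ne_top), integral_smul_measure, integral_smul_measure,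
    integral_dirac, integral_dirac, ENNReal.toReal_ofReal ha, ENNReal.toReal_ofReal hb,
    smul_eq_mul, smul_eq_mul]

theorem sumElim_norm_bound' {X : Type*} [TopologicalSpace X] [CompactSpace X]
    (f g : X → ℝ) (hf : Continuous f) (hg : Continuous g) :
    ∃ C : ℝ, 0 ≤ C ∧ ∀ s : X ⊕ X, ‖Sum.elim f g s‖ ≤ C := by
  obtain ⟨C1, hC1⟩ := isCompact_univ.exists_bound_of_continuousOn hf.continuousOn
  obtain ⟨C2, hC2⟩ := isCompact_univ.exists_bound_of_continuousOn hg.continuousOn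
  refine ⟨max (max C1 C2) 0, le_max_right _ _, ?_⟩
  rintro (x | y)
  · exact le_trans (hC1 x trivial) (le_trans (le_max_left _ _) (le_max_left _ _))
  · exact le_trans (hC2 y trivial) (le_trans (le_max_right _ _) (le_max_left _ _))

theorem sumElim_integrable' {X : Type*} [MeasurableSpace X] [TopologicalSpace X]
    [OpensMeasurableSpace X] [CompactSpace X] (μ : Measure (X ⊕ X)) [IsFiniteMeasure μ]
    {f g : X → ℝ} (hf : Continuous f) (hg : Continuous g) :
    Integrable (Sum.elim f g) μ := by
  obtain ⟨C, -, hC⟩ := sumElim_norm_bound' f g hf hg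
  exact ⟨(hf.measurable.sumElim hg.measurable).aestronglyMeasurable,
    HasFiniteIntegral.of_bounded (C := C) (ae_of_all _ hC)⟩

set_option maxHeartbeats 1000000 in
/-- Two-point extortionate/generous strategies in the randomly-alternating
continuous Donation Game: under the stated conditions on `λ`, `ωX`, `χ`,
`κ_X`, `κ_Y`, `γ = χκ_Y − κ_X` and `p₀`, the reaction probabilities `p(s)`
lie in `[0,1]`, the two-point strategy `σX0 = p₀ δ_K + (1−p₀) δ_0`,
`σX^X[x] = p(x) δ_K + (1−p(x)) δ_0`, `σX^Y[y] = p(y) δ_K + (1−p(y)) δ_0`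
satisfies both autocratic identities with `ψ(s) = −(χ+1)(b(s)+c(s))`, and
consequently it unilaterally enforces `π_X − κ_X = χ (π_Y − κ_Y)` for every
strategy of player `Y`. -/
theorem stmt_17
    (K : ℝ) (hK : 0 < K) (b c : ℝ → ℝ)
    (hbC : ContinuousOn b (Set.Icc 0 K)) (hcC : ContinuousOn c (Set.Icc 0 K))
    (hbM : MonotoneOn b (Set.Icc 0 K)) (hcM : MonotoneOn c (Set.Icc 0 K))
    (hb0 : b 0 = 0) (hc0 : c 0 = 0)
    (hcb : ∀ s ∈ Set.Ioc (0 : ℝ) K, c s < b s)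
    (hcpos : ∀ s ∈ Set.Ioc (0 : ℝ) K, 0 < c s)
    (lam : ℝ) (hlam0 : 0 < lam) (hlam1 : lam < 1)
    (ωX : ℝ) (hω0 : 0 < ωX) (hω1 : ωX ≤ 1)
    (χ : ℝ) (hχ : 1 ≤ χ)
    (hlamge : (1 / ωX) * ((b K + χ * c K) / ((χ + 1) * (b K + c K))) ≤ lam)
    (κX κY γ : ℝ) (hγ : γ = χ * κY - κX)
    (hκ1 : κX ≤ χ * κY)
    (hκ2 : χ * κY ≤ κX +
      (χ * (ωX * b K - (1 - ωX) * c K) - ((1 - ωX) * b K - ωX * c K)))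
    (p0 : ℝ)
    (hp0lb : max ((b K + χ * c K + γ) /
        ((1 - lam) * ωX * (χ + 1) * (b K + c K)) - lam / (1 - lam)) 0 ≤ p0)
    (hp0ub : p0 ≤ min (γ / ((1 - lam) * ωX * (χ + 1) * (b K + c K))) 1)
    (p : Set.Icc (0 : ℝ) K → ℝ)
    (hp : ∀ s : Set.Icc (0 : ℝ) K,
      p s = (b ↑s + χ * c ↑s + γ) / (lam * ωX * (χ + 1) * (b K + c K))
        - ((1 - lam) / lam) * p0)
    (σX0 : Measure (Set.Icc (0 : ℝ) K))
    (hσX0 : σX0 =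
      ENNReal.ofReal p0 • Measure.dirac (⟨K, Set.right_mem_Icc.mpr hK.le⟩ : Set.Icc (0 : ℝ) K)
        + ENNReal.ofReal (1 - p0) • Measure.dirac (⟨0, Set.left_mem_Icc.mpr hK.le⟩ : Set.Icc (0 : ℝ) K))
    (σX : Set.Icc (0 : ℝ) K ⊕ Set.Icc (0 : ℝ) K → Measure (Set.Icc (0 : ℝ) K))
    (hσXs : ∀ s : Set.Icc (0 : ℝ) K ⊕ Set.Icc (0 : ℝ) K, σX s =
      ENNReal.ofReal (p (Sum.elim id id s)) • Measure.dirac (⟨K, Set.right_mem_Icc.mpr hK.le⟩ : Set.Icc (0 : ℝ) K)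
        + ENNReal.ofReal (1 - p (Sum.elim id id s)) • Measure.dirac (⟨0, Set.left_mem_Icc.mpr hK.le⟩ : Set.Icc (0 : ℝ) K)) :
    (∀ s : Set.Icc (0 : ℝ) K, 0 ≤ p s ∧ p s ≤ 1) ∧
    (∀ x : Set.Icc (0 : ℝ) K,
      -(c ↑x) - χ * b ↑x + γ =
        (-(χ + 1) * (b ↑x + c ↑x))
          - lam * ωX * (∫ s, -(χ + 1) * (b ↑s + c ↑s) ∂(σX (Sum.inl x)))
          - (1 - lam) * ωX * (∫ s, -(χ + 1) * (b ↑s + c ↑s) ∂σX0)) ∧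
    (∀ y : Set.Icc (0 : ℝ) K,
      b ↑y + χ * c ↑y + γ =
        -(lam * ωX * (∫ s, -(χ + 1) * (b ↑s + c ↑s) ∂(σX (Sum.inr y))))
          - (1 - lam) * ωX * (∫ s, -(χ + 1) * (b ↑s + c ↑s) ∂σX0)) ∧
    (∀ ν : ℕ → Measure (Set.Icc (0 : ℝ) K ⊕ Set.Icc (0 : ℝ) K),
      (∀ t, IsProbabilityMeasure (ν t)) →
      (∀ E : Set (Set.Icc (0 : ℝ) K), MeasurableSet E →
        ν 0 (Sum.inl '' E) = ENNReal.ofReal ωX * σX0 E) →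
      (∀ (t : ℕ) (E : Set (Set.Icc (0 : ℝ) K)), MeasurableSet E →
        ν (t + 1) (Sum.inl '' E) = ENNReal.ofReal ωX * ∫⁻ s, σX s E ∂(ν t)) →
      ((1 - lam) * ∑' t : ℕ, lam ^ t *
          ∫ s, Sum.elim (fun x : Set.Icc (0 : ℝ) K => -(c ↑x))
            (fun y : Set.Icc (0 : ℝ) K => b ↑y) s ∂(ν t)) - κX =
        χ * (((1 - lam) * ∑' t : ℕ, lam ^ t *
          ∫ s, Sum.elim (fun x : Set.Icc (0 : ℝ) K => b ↑x)
            (fun y : Set.Icc (0 : ℝ) K => -(c ↑y)) s ∂(ν t)) - κY)) := by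
  have hcK : 0 < c K := hcpos K ⟨hK, le_refl K⟩
  have hbcK : 0 < b K + c K := by have := hcb K ⟨hK, le_refl K⟩; linarith
  have hχ1 : (0 : ℝ) < χ + 1 := by linarith
  have h1lam : (0 : ℝ) < 1 - lam := by linarith
  have hL : 0 < lam * ωX * (χ + 1) * (b K + c K) :=
    mul_pos (mul_pos (mul_pos hlam0 hω0) hχ1) hbcK
  have hE : 0 < (1 - lam) * ωX * (χ + 1) * (b K + c K) :=
    mul_pos (mul_pos (mul_pos h1lam hω0) hχ1) hbcK
  have key : ∀ s : Set.Icc (0 : ℝ) K, lam * ωX * (χ + 1) * (b K + c K) * p s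
      = b ↑s + χ * c ↑s + γ - (1 - lam) * ωX * (χ + 1) * (b K + c K) * p0 := by
    intro s
    rw [hp s]
    field_simp
  have hp00 : 0 ≤ p0 := le_trans (le_max_right _ _) hp0lb
  have hp0γ : (1 - lam) * ωX * (χ + 1) * (b K + c K) * p0 ≤ γ := by
    have h := le_trans hp0ub (min_le_left _ _)
    rw [le_div_iff₀ hE] at h
    linarith [mul_comm p0 ((1 - lam) * ωX * (χ + 1) * (b K + c K))]
  have hp0K : b K + χ * c K + γ ≤
      (1 - lam) * ωX * (χ + 1) * (b K + c K) * p0 + lam * ωX * (χ + 1) * (b K + c K) := by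
    have h := le_trans (le_max_left _ _) hp0lb
    rw [sub_le_iff_le_add, div_le_iff₀ hE] at h
    have hid : (p0 + lam / (1 - lam)) * ((1 - lam) * ωX * (χ + 1) * (b K + c K))
        = (1 - lam) * ωX * (χ + 1) * (b K + c K) * p0 + lam * ωX * (χ + 1) * (b K + c K) := by
      field_simp
    linarith
  have part1 : ∀ s : Set.Icc (0 : ℝ) K, 0 ≤ p s ∧ p s ≤ 1 := by
    intro s
    have hbs0 : 0 ≤ b ↑s := by
      have := hbM (Set.left_mem_Icc.mpr hK.le) s.2 s.2.1; linarith [hb0 ▸ this]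
    have hcs0 : 0 ≤ c ↑s := by
      have := hcM (Set.left_mem_Icc.mpr hK.le) s.2 s.2.1; linarith [hc0 ▸ this]
    have hbsK : b ↑s ≤ b K := hbM s.2 (Set.right_mem_Icc.mpr hK.le) s.2.2
    have hcsK : c ↑s ≤ c K := hcM s.2 (Set.right_mem_Icc.mpr hK.le) s.2.2
    constructor
    · nlinarith [key s, hp0γ, hL, mul_nonneg (by linarith : (0:ℝ) ≤ χ) hcs0]
    · nlinarith [key s, hp0K, hL, mul_le_mul_of_nonneg_left hcsK (by linarith : (0:ℝ) ≤ χ)]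
  refine ⟨part1, ?_, ?_, ?_⟩
  · intro x
    rw [hσXs (Sum.inl x), hσX0,
      two_point_integral' _ _ _ (part1 _).1 (by linarith [(part1 (Sum.elim id id (Sum.inl x))).2]) _ _,
      two_point_integral' _ _ _ hp00 (by linarith [le_trans hp0ub (min_le_right _ _)]) _ _]
    simp only [Sum.elim_inl, id_eq]
    show -(c ↑x) - χ * b ↑x + γ =
      (-(χ + 1) * (b ↑x + c ↑x))
        - lam * ωX * (p x * (-(χ + 1) * (b K + c K)) + (1 - p x) * (-(χ + 1) * (b 0 + c 0)))
        - (1 - lam) * ωX * (p0 * (-(χ + 1) * (b K + c K)) + (1 - p0) * (-(χ + 1) * (b 0 + c 0)))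
    rw [hb0, hc0]
    linear_combination -key x
  · intro y
    rw [hσXs (Sum.inr y), hσX0,
      two_point_integral' _ _ _ (part1 _).1 (by linarith [(part1 (Sum.elim id id (Sum.inr y))).2]) _ _,
      two_point_integral' _ _ _ hp00 (by linarith [le_trans hp0ub (min_le_right _ _)]) _ _]
    simp only [Sum.elim_inr, id_eq]
    show b ↑y + χ * c ↑y + γ =
      -(lam * ωX * (p y * (-(χ + 1) * (b K + c K)) + (1 - p y) * (-(χ + 1) * (b 0 + c 0))))
        - (1 - lam) * ωX * (p0 * (-(χ + 1) * (b K + c K)) + (1 - p0) * (-(χ + 1) * (b 0 + c 0)))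
    rw [hb0, hc0]
    linear_combination -key y
  · intro ν hprob h0 hrec
    -- notation
    set K' : Set.Icc (0 : ℝ) K := ⟨K, Set.right_mem_Icc.mpr hK.le⟩ with hK'
    set Z' : Set.Icc (0 : ℝ) K := ⟨0, Set.left_mem_Icc.mpr hK.le⟩ with hZ'
    have hZK : Z' ≠ K' := by
      simp only [hK', hZ', ne_eq, Subtype.mk.injEq]
      exact hK.ne
    haveI : CompactSpace (Set.Icc (0 : ℝ) K) := isCompact_iff_compactSpace.mp isCompact_Icc
    have hcb' : Continuous (fun s : Set.Icc (0 : ℝ) K => b ↑s) := ContinuousOn.restrict hbC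
    have hcc' : Continuous (fun s : Set.Icc (0 : ℝ) K => c ↑s) := ContinuousOn.restrict hcC
    have hpc : Continuous p := by
      rw [show p = fun s : Set.Icc (0 : ℝ) K =>
          (b ↑s + χ * c ↑s + γ) / (lam * ωX * (χ + 1) * (b K + c K))
            - ((1 - lam) / lam) * p0 from funext hp]
      exact (((hcb'.add (continuous_const.mul hcc')).add continuous_const).div_const _).sub
        continuous_const
    have hKK : MeasurableSet ({Sum.inl K'} :
        Set (Set.Icc (0 : ℝ) K ⊕ Set.Icc (0 : ℝ) K)) := by
      rw [← Set.image_singleton]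
      exact (measurableSet_singleton _).inl_image
    -- integrability
    have hIu : ∀ t, Integrable (Sum.elim (fun x : Set.Icc (0 : ℝ) K => -(c ↑x))
        (fun y : Set.Icc (0 : ℝ) K => b ↑y)) (ν t) := by
      intro t; haveI := hprob t; exact sumElim_integrable' _ hcc'.neg hcb'
    have hIv : ∀ t, Integrable (Sum.elim (fun x : Set.Icc (0 : ℝ) K => b ↑x)
        (fun y : Set.Icc (0 : ℝ) K => -(c ↑y))) (ν t) := by
      intro t; haveI := hprob t; exact sumElim_integrable' _ hcb' hcc'.neg
    have hpe : (fun s : Set.Icc (0 : ℝ) K ⊕ Set.Icc (0 : ℝ) K => p (Sum.elim id id s))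
        = Sum.elim p p := by funext s; cases s <;> rfl
    have hIp : ∀ t, Integrable
        (fun s : Set.Icc (0 : ℝ) K ⊕ Set.Icc (0 : ℝ) K => p (Sum.elim id id s)) (ν t) := by
      intro t; haveI := hprob t; rw [hpe]; exact sumElim_integrable' _ hpc hpc
    have hψc : Continuous (fun s : Set.Icc (0 : ℝ) K => -(χ + 1) * (b ↑s + c ↑s)) :=
      continuous_const.mul (hcb'.add hcc')
    have hIψ : ∀ t, Integrable (Sum.elim (fun s : Set.Icc (0 : ℝ) K => -(χ + 1) * (b ↑s + c ↑s))
        (fun _ : Set.Icc (0 : ℝ) K => (0 : ℝ))) (ν t) := by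
      intro t; haveI := hprob t; exact sumElim_integrable' _ hψc continuous_const
    -- singleton values of the strategy measures
    have hσK : ∀ s, σX s {K'} = ENNReal.ofReal (p (Sum.elim id id s)) := by
      intro s
      rw [hσXs s]
      simp [Measure.dirac_apply, Set.indicator_apply, Set.mem_singleton_iff, hZK]
    have hσ0K : σX0 {K'} = ENNReal.ofReal p0 := by
      rw [hσX0]
      simp [Measure.dirac_apply, Set.indicator_apply, Set.mem_singleton_iff, hZK]
    -- m 0
    have hm0 : (ν 0 {Sum.inl K'}).toReal = ωX * p0 := by
      rw [← Set.image_singleton, h0 _ (measurableSet_singleton _), hσ0K,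
        ← ENNReal.ofReal_mul hω0.le, ENNReal.toReal_ofReal (mul_nonneg hω0.le hp00)]
    -- m (t+1)
    have hI0 : ∀ t, 0 ≤ ∫ s, p (Sum.elim id id s) ∂ν t :=
      fun t => integral_nonneg fun s => (part1 _).1
    have hms : ∀ t, (ν (t + 1) {Sum.inl K'}).toReal
        = ωX * ∫ s, p (Sum.elim id id s) ∂ν t := by
      intro t
      rw [← Set.image_singleton, hrec t _ (measurableSet_singleton _)]
      have hlint : ∫⁻ s, σX s {K'} ∂ν t
          = ENNReal.ofReal (∫ s, p (Sum.elim id id s) ∂ν t) := by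
        rw [lintegral_congr hσK,
          ← ofReal_integral_eq_lintegral_ofReal (hIp t) (ae_of_all _ fun s => (part1 _).1)]
      rw [hlint, ← ENNReal.ofReal_mul hω0.le,
        ENNReal.toReal_ofReal (mul_nonneg hω0.le (hI0 t))]
    -- bounds on m t
    have hm01 : ∀ t, 0 ≤ (ν t {Sum.inl K'}).toReal ∧ (ν t {Sum.inl K'}).toReal ≤ 1 := by
      intro t
      refine ⟨ENNReal.toReal_nonneg, ?_⟩
      have h1 := prob_le_one (μ := ν t) (s := {Sum.inl K'})
      exact ENNReal.toReal_le_of_le_ofReal zero_le_one (by simpa using h1)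
    -- the inl-part of ν t lives on {K', Z'}
    have hnull : ∀ t, ν t (Sum.inl '' ({K', Z'}ᶜ)) = 0 := by
      intro t
      have hmeasC : MeasurableSet ({K', Z'}ᶜ : Set (Set.Icc (0 : ℝ) K)) :=
        ((measurableSet_singleton Z').insert K').compl
      have hdir : ∀ q : ℝ, (ENNReal.ofReal q • Measure.dirac K'
          + ENNReal.ofReal (1 - q) • Measure.dirac Z') ({K', Z'}ᶜ) = 0 := by
        intro q
        simp [Measure.dirac_apply, Set.indicator_of_notMem]
      cases t with
      | zero =>
        rw [h0 _ hmeasC, hσX0, hdir, mul_zero]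
      | succ n =>
        rw [hrec n _ hmeasC]
        have : ∀ s, σX s ({K', Z'}ᶜ) = 0 := by
          intro s; rw [hσXs s]; exact hdir _
        rw [lintegral_congr this, lintegral_zero, mul_zero]
    -- a.e. identification of the "ψ on inl" function
    have hae : ∀ t, (Sum.elim (fun s : Set.Icc (0 : ℝ) K => -(χ + 1) * (b ↑s + c ↑s))
          (fun _ : Set.Icc (0 : ℝ) K => (0 : ℝ)))
        =ᵐ[ν t] ({Sum.inl K'} : Set _).indicator (fun _ => -(χ + 1) * (b K + c K)) := by
      intro t
      rw [Filter.EventuallyEq, ae_iff]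
      refine measure_mono_null (fun s hs => ?_) (hnull t)
      simp only [Set.mem_setOf_eq] at hs
      rcases s with x | y
      · by_cases hx : x = K'
        · exfalso
          apply hs
          subst hx
          rw [Sum.elim_inl, Set.indicator_of_mem (Set.mem_singleton _)]
        by_cases hx0 : x = Z'
        · exfalso
          apply hs
          subst hx0
          rw [Sum.elim_inl, Set.indicator_of_notMem (by simp [hZK])]
          simp only [hZ']
          show -(χ + 1) * (b 0 + c 0) = 0
          rw [hb0, hc0]
          ring
        · exact ⟨x, by simp [hx, hx0], rfl⟩
      · exfalso
        apply hs
        rw [Sum.elim_inr, Set.indicator_of_notMem (by simp)]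
    have hJ : ∀ t, ∫ s, (Sum.elim (fun s : Set.Icc (0 : ℝ) K => -(χ + 1) * (b ↑s + c ↑s))
          (fun _ : Set.Icc (0 : ℝ) K => (0 : ℝ))) s ∂ν t
        = -(χ + 1) * (b K + c K) * (ν t {Sum.inl K'}).toReal := by
      intro t
      rw [integral_congr_ae (hae t), integral_indicator_const _ hKK, smul_eq_mul, mul_comm]
      rfl
    -- pointwise identity
    have hptwise : ∀ s : Set.Icc (0 : ℝ) K ⊕ Set.Icc (0 : ℝ) K,
        (Sum.elim (fun x : Set.Icc (0 : ℝ) K => -(c ↑x))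
          (fun y : Set.Icc (0 : ℝ) K => b ↑y)) s
          - χ * (Sum.elim (fun x : Set.Icc (0 : ℝ) K => b ↑x)
            (fun y : Set.Icc (0 : ℝ) K => -(c ↑y))) s
        = (Sum.elim (fun s : Set.Icc (0 : ℝ) K => -(χ + 1) * (b ↑s + c ↑s))
            (fun _ : Set.Icc (0 : ℝ) K => (0 : ℝ))) s
          + (lam * ωX * (χ + 1) * (b K + c K) * p (Sum.elim id id s)
            + ((1 - lam) * ωX * (χ + 1) * (b K + c K) * p0 - γ)) := by
      rintro (x | y) <;> simp only [Sum.elim_inl, Sum.elim_inr, id_eq]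
      · linear_combination -key x
      · linear_combination -key y
    -- the per-round identity
    have hA : ∀ t,
        (∫ s, (Sum.elim (fun x : Set.Icc (0 : ℝ) K => -(c ↑x))
          (fun y : Set.Icc (0 : ℝ) K => b ↑y)) s ∂ν t)
        - χ * ∫ s, (Sum.elim (fun x : Set.Icc (0 : ℝ) K => b ↑x)
            (fun y : Set.Icc (0 : ℝ) K => -(c ↑y))) s ∂ν t
        = -(χ + 1) * (b K + c K) * (ν t {Sum.inl K'}).toReal
          + lam * ωX * (χ + 1) * (b K + c K) * (∫ s, p (Sum.elim id id s) ∂ν t)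
          + ((1 - lam) * ωX * (χ + 1) * (b K + c K) * p0 - γ) := by
      intro t
      haveI := hprob t
      have h2 : Integrable (fun a : Set.Icc (0 : ℝ) K ⊕ Set.Icc (0 : ℝ) K =>
          lam * ωX * (χ + 1) * (b K + c K) * p (Sum.elim id id a)
            + ((1 - lam) * ωX * (χ + 1) * (b K + c K) * p0 - γ)) (ν t) :=
        ((hIp t).const_mul _).add (integrable_const _)
      have e1 : (∫ s, ((Sum.elim (fun s : Set.Icc (0 : ℝ) K => -(χ + 1) * (b ↑s + c ↑s))
            (fun _ : Set.Icc (0 : ℝ) K => (0 : ℝ))) s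
            + (lam * ωX * (χ + 1) * (b K + c K) * p (Sum.elim id id s)
              + ((1 - lam) * ωX * (χ + 1) * (b K + c K) * p0 - γ))) ∂ν t)
          = (∫ s, (Sum.elim (fun s : Set.Icc (0 : ℝ) K => -(χ + 1) * (b ↑s + c ↑s))
            (fun _ : Set.Icc (0 : ℝ) K => (0 : ℝ))) s ∂ν t)
            + ∫ s, (lam * ωX * (χ + 1) * (b K + c K) * p (Sum.elim id id s)
              + ((1 - lam) * ωX * (χ + 1) * (b K + c K) * p0 - γ)) ∂ν t :=
        integral_add (hIψ t) h2
      have e2 : (∫ s, (lam * ωX * (χ + 1) * (b K + c K) * p (Sum.elim id id s)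
              + ((1 - lam) * ωX * (χ + 1) * (b K + c K) * p0 - γ)) ∂ν t)
          = (∫ s, lam * ωX * (χ + 1) * (b K + c K) * p (Sum.elim id id s) ∂ν t)
            + ((1 - lam) * ωX * (χ + 1) * (b K + c K) * p0 - γ) := by
        have e3 := integral_add ((hIp t).const_mul (lam * ωX * (χ + 1) * (b K + c K)))
          (integrable_const (μ := ν t) ((1 - lam) * ωX * (χ + 1) * (b K + c K) * p0 - γ))
        rw [integral_const] at e3
        simpa [measure_univ] using e3
      rw [← integral_const_mul, ← integral_sub (hIu t) ((hIv t).const_mul χ),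
        integral_congr_ae (ae_of_all _ hptwise), e1, e2, integral_const_mul, hJ t]
      ring
    -- summability
    have hgsum : Summable (fun t : ℕ =>
        lam ^ t * (-(χ + 1) * (b K + c K) * (ν t {Sum.inl K'}).toReal)) := by
      refine Summable.of_norm_bounded
        ((summable_geometric_of_lt_one hlam0.le hlam1).mul_right ((χ + 1) * (b K + c K))) fun t => ?_
      have hmt := hm01 t
      rw [Real.norm_eq_abs, abs_mul, abs_pow, abs_of_nonneg hlam0.le]
      refine mul_le_mul_of_nonneg_left ?_ (pow_nonneg hlam0.le t)
      rw [abs_mul, abs_of_nonneg hmt.1]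
      rw [show -(χ + 1) * (b K + c K) = -((χ + 1) * (b K + c K)) by ring, abs_neg,
        abs_of_pos (mul_pos hχ1 hbcK)]
      nlinarith [hmt.2, mul_pos hχ1 hbcK]
    have hgsum' : Summable (fun t : ℕ =>
        lam ^ (t + 1) * (-(χ + 1) * (b K + c K) * (ν (t + 1) {Sum.inl K'}).toReal)) :=
      (summable_nat_add_iff 1).mpr hgsum
    have hSgen : ∀ (f g : Set.Icc (0 : ℝ) K → ℝ), Continuous f → Continuous g →
        Summable (fun t : ℕ => lam ^ t * ∫ s, Sum.elim f g s ∂ν t) := by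
      intro f g hf hg
      obtain ⟨C, hC0, hC⟩ := sumElim_norm_bound' f g hf hg
      refine Summable.of_norm_bounded
        ((summable_geometric_of_lt_one hlam0.le hlam1).mul_right C) fun t => ?_
      haveI := hprob t
      rw [Real.norm_eq_abs, abs_mul, abs_pow, abs_of_nonneg hlam0.le]
      refine mul_le_mul_of_nonneg_left ?_ (pow_nonneg hlam0.le t)
      have := norm_integral_le_of_norm_le_const (μ := ν t) (ae_of_all _ hC)
      simpa [measure_univ] using this
    have hSu := hSgen (fun x : Set.Icc (0 : ℝ) K => -(c ↑x)) _ hcc'.neg hcb'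
    have hSv := hSgen _ (fun y : Set.Icc (0 : ℝ) K => -(c ↑y)) hcb' hcc'.neg
    have hc3sum : Summable (fun t : ℕ =>
        ((1 - lam) * ωX * (χ + 1) * (b K + c K) * p0 - γ) * lam ^ t) :=
      (summable_geometric_of_lt_one hlam0.le hlam1).mul_left _
    -- per-term telescoping identity
    have hterm : ∀ t : ℕ,
        lam ^ t * (∫ s, (Sum.elim (fun x : Set.Icc (0 : ℝ) K => -(c ↑x))
          (fun y : Set.Icc (0 : ℝ) K => b ↑y)) s ∂ν t)
        - χ * (lam ^ t * ∫ s, (Sum.elim (fun x : Set.Icc (0 : ℝ) K => b ↑x)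
            (fun y : Set.Icc (0 : ℝ) K => -(c ↑y))) s ∂ν t)
        = lam ^ t * (-(χ + 1) * (b K + c K) * (ν t {Sum.inl K'}).toReal)
          - lam ^ (t + 1) * (-(χ + 1) * (b K + c K) * (ν (t + 1) {Sum.inl K'}).toReal)
          + ((1 - lam) * ωX * (χ + 1) * (b K + c K) * p0 - γ) * lam ^ t := by
      intro t
      have h1 := hA t
      have h2 := hms t
      rw [h2]
      linear_combination lam ^ t * h1
    -- compute the series
    have hsub : (∑' t : ℕ, lam ^ t *
          ∫ s, Sum.elim (fun x : Set.Icc (0 : ℝ) K => -(c ↑x))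
            (fun y : Set.Icc (0 : ℝ) K => b ↑y) s ∂(ν t))
        - χ * (∑' t : ℕ, lam ^ t *
          ∫ s, Sum.elim (fun x : Set.Icc (0 : ℝ) K => b ↑x)
            (fun y : Set.Icc (0 : ℝ) K => -(c ↑y)) s ∂(ν t)) = -γ / (1 - lam) := by
      rw [← tsum_mul_left, ← Summable.tsum_sub hSu (hSv.mul_left χ), tsum_congr hterm,
        Summable.tsum_add (hgsum.sub hgsum') hc3sum, Summable.tsum_sub hgsum hgsum', tsum_mul_left,
        tsum_geometric_of_lt_one hlam0.le hlam1]
      have hz := Summable.tsum_eq_zero_add hgsum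
      rw [show (∑' t : ℕ, lam ^ t * (-(χ + 1) * (b K + c K) * (ν t {Sum.inl K'}).toReal))
          - ∑' t : ℕ, lam ^ (t + 1) * (-(χ + 1) * (b K + c K) * (ν (t + 1) {Sum.inl K'}).toReal)
          = lam ^ 0 * (-(χ + 1) * (b K + c K) * (ν 0 {Sum.inl K'}).toReal) by linarith, hm0]
      field_simp
      ring
    have hsub' : (1 - lam) * ((∑' t : ℕ, lam ^ t *
          ∫ s, Sum.elim (fun x : Set.Icc (0 : ℝ) K => -(c ↑x))
            (fun y : Set.Icc (0 : ℝ) K => b ↑y) s ∂(ν t))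
        - χ * (∑' t : ℕ, lam ^ t *
          ∫ s, Sum.elim (fun x : Set.Icc (0 : ℝ) K => b ↑x)
            (fun y : Set.Icc (0 : ℝ) K => -(c ↑y)) s ∂(ν t))) = -γ := by
      rw [hsub]
      field_simp
    linear_combination hsub' - hγ
end
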